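/- The function f(t) = t^p on [0,∞) is superquadratic whenever p ≥ 2; that is, for every a ≥ 0 there exists a constant C_a ∈ ℝ such that b^p ≥ a^p + C_a (b - a) + |b - a|^p for all b ≥ 0 (one may take C_a = p a^{p-1}). -/

import Mathlib

open Real Set

lemma superadd_rpow {q : ℝ} (hq : 1 ≤ q) {x y : ℝ} (hx : 0 ≤ x) (hy : 0 ≤ y) :
    x ^ q + y ^ q ≤ (x + y) ^ q := by
  have h := NNReal.add_rpow_le_rpow_add x.toNNReal y.toNNReal hq
  have h2 := NNReal.coe_le_coe.2 h
  rw [NNReal.coe_add, NNReal.coe_rpow, NNReal.coe_rpow, NNReal.coe_rpow, NNReal.coe_add,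
    Real.coe_toNNReal x hx, Real.coe_toNNReal y hy] at h2
  exact h2

theorem rpow_superquadratic (p : ℝ) (hp : 2 ≤ p) :
    ∀ a : ℝ, 0 ≤ a → ∃ C : ℝ, C = p * a ^ (p - 1) ∧
      ∀ b : ℝ, 0 ≤ b → b ^ p ≥ a ^ p + C * (b - a) + |b - a| ^ p := by
  intro a ha
  refine ⟨p * a ^ (p - 1), rfl, ?_⟩
  intro b hb
  have hp1 : (1:ℝ) ≤ p := by linarith
  have hp1' : (1:ℝ) ≤ p - 1 := by linarith
  have hcont : ∀ c : ℝ, ContinuousOn (fun t : ℝ => (t - c) ^ p) univ := by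
    intro c
    apply ContinuousOn.rpow_const
    · exact (continuous_id.sub continuous_const).continuousOn
    · intro t _; right; linarith
  rcases le_or_gt a b with hab | hab
  · -- case a ≤ b
    have habs : |b - a| = b - a := abs_of_nonneg (by linarith)
    rw [habs]
    set g : ℝ → ℝ := fun t => t ^ p - p * a ^ (p - 1) * t - (t - a) ^ p with hg
    have hmono : MonotoneOn g (Ici a) := by
      apply monotoneOn_of_hasDerivWithinAt_nonneg (f' := fun t =>
        p * t ^ (p - 1) - p * a ^ (p - 1) - p * (t - a) ^ (p - 1)) (convex_Ici a)
      · apply ContinuousOn.sub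
        apply ContinuousOn.sub
        · exact ContinuousOn.rpow_const continuousOn_id (fun t _ => Or.inr (by linarith))
        · exact (continuous_const.mul continuous_id).continuousOn
        · exact ((hcont a).mono (subset_univ _))
      · intro t ht
        rw [interior_Ici] at ht
        have ht' : a < t := ht
        have h1 : HasDerivAt (fun t : ℝ => t ^ p) (p * t ^ (p - 1)) t :=
          Real.hasDerivAt_rpow_const (Or.inr hp1)
        have h2 : HasDerivAt (fun t : ℝ => p * a ^ (p - 1) * t) (p * a ^ (p - 1)) t := by
          simpa using (hasDerivAt_id t).const_mul (p * a ^ (p - 1))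
        have h3 : HasDerivAt (fun t : ℝ => (t - a) ^ p) (p * (t - a) ^ (p - 1)) t := by
          have hsub : HasDerivAt (fun t : ℝ => t - a) 1 t := (hasDerivAt_id t).sub_const a
          have := (Real.hasDerivAt_rpow_const (x := t - a) (p := p) (Or.inr hp1)).comp t hsub
          simpa [Function.comp_def] using this
        exact (((h1.sub h2).sub h3).hasDerivWithinAt)
      · intro t ht
        rw [interior_Ici] at ht
        have ht' : a < t := ht
        have key : a ^ (p - 1) + (t - a) ^ (p - 1) ≤ t ^ (p - 1) := by
          have := superadd_rpow hp1' ha (le_of_lt (by linarith : (0:ℝ) < t - a))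
          simpa using this
        have hp0 : 0 < p := by linarith
        nlinarith [mul_le_mul_of_nonneg_left key hp0.le]
    have := hmono (self_mem_Ici) (mem_Ici.mpr hab) hab
    simp only [hg] at this
    have hra : (a - a : ℝ) = 0 := by ring
    rw [hra, Real.zero_rpow (by linarith : p ≠ 0)] at this
    nlinarith [this]
  · -- case b < a
    have habs : |b - a| = a - b := by rw [abs_of_nonpos (by linarith : b - a ≤ 0)]; ring
    rw [habs]
    set g : ℝ → ℝ := fun t => t ^ p - p * a ^ (p - 1) * t - (a - t) ^ p with hg
    have hanti : AntitoneOn g (Icc 0 a) := by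
      apply antitoneOn_of_hasDerivWithinAt_nonpos (f' := fun t =>
        p * t ^ (p - 1) - p * a ^ (p - 1) + p * (a - t) ^ (p - 1)) (convex_Icc 0 a)
      · apply ContinuousOn.sub
        apply ContinuousOn.sub
        · exact ContinuousOn.rpow_const continuousOn_id (fun t _ => Or.inr (by linarith))
        · exact (continuous_const.mul continuous_id).continuousOn
        · apply ContinuousOn.rpow_const
          · exact (continuous_const.sub continuous_id).continuousOn
          · intro t _; right; linarith
      · intro t ht
        rw [interior_Icc] at ht
        have h1 : HasDerivAt (fun t : ℝ => t ^ p) (p * t ^ (p - 1)) t :=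
          Real.hasDerivAt_rpow_const (Or.inr hp1)
        have h2 : HasDerivAt (fun t : ℝ => p * a ^ (p - 1) * t) (p * a ^ (p - 1)) t := by
          simpa using (hasDerivAt_id t).const_mul (p * a ^ (p - 1))
        have h3 : HasDerivAt (fun t : ℝ => (a - t) ^ p) (-(p * (a - t) ^ (p - 1))) t := by
          have hsub : HasDerivAt (fun t : ℝ => a - t) (-1) t := by
            simpa using (hasDerivAt_id t).const_sub a
          have := (Real.hasDerivAt_rpow_const (x := a - t) (p := p) (Or.inr hp1)).comp t hsub
          simpa [mul_comm, Function.comp_def] using this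
        have := (h1.sub h2).sub h3
        exact this.hasDerivWithinAt.congr_deriv (by ring)
      · intro t ht
        rw [interior_Icc] at ht
        obtain ⟨ht0, hta⟩ := ht
        have key : t ^ (p - 1) + (a - t) ^ (p - 1) ≤ a ^ (p - 1) := by
          have := superadd_rpow hp1' ht0.le (le_of_lt (by linarith : (0:ℝ) < a - t))
          simpa using this
        have hp0 : 0 < p := by linarith
        nlinarith [mul_le_mul_of_nonneg_left key hp0.le]
    have := hanti (mem_Icc.mpr ⟨hb, hab.le⟩) (mem_Icc.mpr ⟨ha, le_refl a⟩ : a ∈ Icc 0 a) hab.le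
    simp only [hg] at this
    have hra : (a - a : ℝ) = 0 := by ring
    rw [hra, Real.zero_rpow (by linarith : p ≠ 0)] at this
    nlinarith [this]
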